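/- Let m ∈ (0,1] and h(γ) = 1 for all γ. If G : [0,∞) → ℝ is nonnegative and satisfies G(γx + m(1-γ)y) ≤ G(x) + m·G(y) for all x, y ≥ 0 and γ ∈ [0,1], and 0 ≤ ν < μ with G integrable, then (1/(m+1)) · [(1/(mμ - ν)) ∫_ν^{mμ} G(x) dx + (1/(μ - mν)) ∫_{mν}^μ G(x) dx] ≤ G(ν) + G(μ). -/

import Mathlib

open MeasureTheory

lemma avg_le_of_bound (G : ℝ → ℝ) (a b C : ℝ) (hC : 0 ≤ C)
    (hint : IntervalIntegrable G volume a b)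
    (hbd : ∀ t ∈ Set.uIcc a b, G t ≤ C) :
    (1 / (b - a)) * ∫ x in a..b, G x ≤ C := by
  rcases lt_trichotomy a b with h | h | h
  · have hbd' : ∀ t ∈ Set.Icc a b, G t ≤ C := by
      intro t ht; exact hbd t (by rw [Set.uIcc_of_le h.le]; exact ht)
    have hInt : (∫ x in a..b, G x) ≤ ∫ x in a..b, C := by
      apply intervalIntegral.integral_mono_on h.le hint (intervalIntegrable_const) hbd'
    have : (∫ x in a..b, (C:ℝ)) = (b - a) * C := by
      simp [intervalIntegral.integral_const, smul_eq_mul]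
    rw [this] at hInt
    have hba : (0:ℝ) < b - a := by linarith
    rw [div_mul_eq_mul_div, one_mul, div_le_iff₀ hba]
    linarith [hInt]
  · simp [h, hC]
  · have hbd' : ∀ t ∈ Set.Icc b a, G t ≤ C := by
      intro t ht; exact hbd t (by rw [Set.uIcc_of_ge h.le]; exact ht)
    have hInt : (∫ x in b..a, G x) ≤ ∫ x in b..a, C :=
      intervalIntegral.integral_mono_on h.le hint.symm (intervalIntegrable_const) hbd'
    have hCeq : (∫ x in b..a, (C:ℝ)) = (a - b) * C := by
      simp [intervalIntegral.integral_const, smul_eq_mul]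
    rw [hCeq] at hInt
    have hrev : (∫ x in a..b, G x) = -∫ x in b..a, G x :=
      (intervalIntegral.integral_symm b a)
    have hab : (0:ℝ) < a - b := by linarith
    rw [hrev]
    have : (1 / (b - a)) * -∫ x in b..a, G x = (1 / (a - b)) * ∫ x in b..a, G x := by
      have hba : b - a ≠ 0 := by intro hh; apply absurd hh; intro hh; linarith [sub_eq_zero.mp hh]
      field_simp
      ring
    rw [this, div_mul_eq_mul_div, one_mul, div_le_iff₀ hab]
    linarith [hInt]

theorem p_function_HH
    (ν μ m : ℝ) (hν : 0 ≤ ν) (hνμ : ν < μ) (hm : m ∈ Set.Ioc (0:ℝ) 1)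
    (G : ℝ → ℝ)
    (hGnonneg : ∀ x : ℝ, 0 ≤ x → 0 ≤ G x)
    (hG : ∀ x : ℝ, 0 ≤ x → ∀ y : ℝ, 0 ≤ y → ∀ γ ∈ Set.Icc (0:ℝ) 1,
      G (γ * x + m * (1 - γ) * y) ≤ G x + m * G y)
    (hGint1 : IntervalIntegrable G MeasureTheory.volume ν (m * μ))
    (hGint2 : IntervalIntegrable G MeasureTheory.volume (m * ν) μ) :
    (1 / (m + 1)) * ((1 / (m * μ - ν)) * (∫ x in ν..(m * μ), G x)
        + (1 / (μ - m * ν)) * ∫ x in (m * ν)..μ, G x)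
      ≤ G ν + G μ := by
  obtain ⟨hm0, hm1⟩ := hm
  have hμ : 0 ≤ μ := le_of_lt (lt_of_le_of_lt hν hνμ)
  have hGν : 0 ≤ G ν := hGnonneg ν hν
  have hGμ : 0 ≤ G μ := hGnonneg μ hμ
  -- bound on first interval
  have hb1 : ∀ t ∈ Set.uIcc ν (m * μ), G t ≤ G ν + m * G μ := by
    intro t ht
    by_cases hne : m * μ = ν
    · rw [hne, Set.uIcc_self, Set.mem_singleton_iff] at ht
      subst ht; nlinarith
    · set γ := (m * μ - t) / (m * μ - ν) with hγdef
      have hγ : γ ∈ Set.Icc (0:ℝ) 1 := by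
        rcases lt_or_gt_of_ne hne with h | h
        · rw [Set.uIcc_of_ge h.le, Set.mem_Icc] at ht
          constructor
          · apply div_nonneg_of_nonpos <;> linarith
          · rw [div_le_one_of_neg (by linarith)]; linarith
        · rw [Set.uIcc_of_le h.le, Set.mem_Icc] at ht
          constructor
          · apply div_nonneg <;> linarith
          · rw [div_le_one (by linarith)]; linarith
      have heq : γ * ν + m * (1 - γ) * μ = t := by
        have hne' : m * μ - ν ≠ 0 := sub_ne_zero.mpr hne
        field_simp [hγdef]
        have h3 : γ * (m * μ - ν) = m * μ - t := by rw [hγdef]; exact div_mul_cancel₀ _ hne'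
        linear_combination -h3
      have := hG ν hν μ hμ γ hγ
      rw [heq] at this
      exact this
  have hb2 : ∀ t ∈ Set.uIcc (m * ν) μ, G t ≤ G μ + m * G ν := by
    intro t ht
    have hlt : m * ν < μ := lt_of_le_of_lt (by nlinarith) hνμ
    rw [Set.uIcc_of_le hlt.le, Set.mem_Icc] at ht
    set γ := (t - m * ν) / (μ - m * ν) with hγdef
    have hγ : γ ∈ Set.Icc (0:ℝ) 1 := by
      constructor
      · apply div_nonneg <;> linarith
      · rw [div_le_one (by linarith)]; linarith
    have heq : γ * μ + m * (1 - γ) * ν = t := by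
      have hne' : μ - m * ν ≠ 0 := by linarith
      field_simp [hγdef]
      have h3 : γ * (μ - m * ν) = t - m * ν := by rw [hγdef]; exact div_mul_cancel₀ _ hne'
      linear_combination h3
    have := hG μ hμ ν hν γ hγ
    rw [heq] at this
    exact this
  have T1 : (1 / (m * μ - ν)) * (∫ x in ν..(m * μ), G x) ≤ G ν + m * G μ :=
    avg_le_of_bound G ν (m * μ) _ (by nlinarith) hGint1 hb1
  have T2 : (1 / (μ - m * ν)) * (∫ x in (m * ν)..μ, G x) ≤ G μ + m * G ν :=
    avg_le_of_bound G (m * ν) μ _ (by nlinarith) hGint2 hb2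
  have hsum : (1 / (m * μ - ν)) * (∫ x in ν..(m * μ), G x)
      + (1 / (μ - m * ν)) * (∫ x in (m * ν)..μ, G x) ≤ (m + 1) * (G ν + G μ) := by
    nlinarith
  have hm1pos : (0:ℝ) < m + 1 := by linarith
  rw [div_mul_eq_mul_div, one_mul, div_le_iff₀ hm1pos]
  nlinarith
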